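/- arXiv:2111.05614 — 2 statements merged into one kernel-verified Lean document; each statement's English description precedes it below -/
import Mathlib

section
/- With c₁(κ) = (1/n)⟨Tr A⟩_{exp(κ Tr A)} defined via Haar-measure averages over SO(n,ℝ), one has lim_{κ→∞} c₁(κ) = 1. -/
open MeasureTheory Matrix

noncomputable section

/-- A measurable space structure on matrices (the product σ-algebra on entries). -/
instance matMS (n : ℕ) : MeasurableSpace (Matrix (Fin n) (Fin n) ℝ) :=
  (by infer_instance : MeasurableSpace (Fin n → Fin n → ℝ))

/-- The special orthogonal group `SO(n, ℝ)`, as the subgroup of the orthogonal group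
consisting of matrices of determinant one. -/
def SOsub (n : ℕ) : Subgroup (Matrix.orthogonalGroup (Fin n) ℝ) where
  carrier := {A | (A : Matrix (Fin n) (Fin n) ℝ).det = 1}
  one_mem' := by simp
  mul_mem' := by
    intro a b ha hb
    simp only [Set.mem_setOf_eq, Submonoid.coe_mul, Matrix.det_mul] at *
    rw [ha, hb, mul_one]
  inv_mem' := by
    intro a ha
    simp only [Set.mem_setOf_eq] at *
    have h : ((a⁻¹ : Matrix.orthogonalGroup (Fin n) ℝ) : Matrix (Fin n) (Fin n) ℝ)
        = star (a : Matrix (Fin n) (Fin n) ℝ) := rfl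
    rw [h, Matrix.star_eq_conjTranspose, Matrix.det_conjTranspose, ha, star_one]

/-- Elements of `SO(n, ℝ)`. -/
abbrev SO (n : ℕ) := SOsub n

/-- The underlying matrix of an element of `SO(n, ℝ)`. -/
def mat {n : ℕ} (A : SO n) : Matrix (Fin n) (Fin n) ℝ :=
  ((A : Matrix.orthogonalGroup (Fin n) ℝ) : Matrix (Fin n) (Fin n) ℝ)

-- basic lemmas
lemma abs_le_one_of_sq_le_one {x : ℝ} (h : x ^ 2 ≤ 1) : |x| ≤ 1 := by
  nlinarith [abs_nonneg x, sq_abs x]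

lemma abs_trace_le {n : ℕ} (A : SO n) : |(mat A).trace| ≤ n := by
  have hmem : mat A ∈ Matrix.orthogonalGroup (Fin n) ℝ :=
    (A : Matrix.orthogonalGroup (Fin n) ℝ).2
  have h : star (mat A) * mat A = 1 := (Matrix.mem_orthogonalGroup_iff' (Fin n) ℝ).mp hmem
  have hd : ∀ i, |mat A i i| ≤ 1 := by
    intro i
    have h1 : (star (mat A) * mat A) i i = (1 : Matrix (Fin n) (Fin n) ℝ) i i := by rw [h]
    rw [Matrix.mul_apply, Matrix.one_apply_eq] at h1
    have h2 : ∑ k, (mat A k i) ^ 2 = 1 := by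
      rw [← h1]
      refine Finset.sum_congr rfl fun k _ => ?_
      simp [Matrix.star_apply, sq]
    have h3 : (mat A i i) ^ 2 ≤ 1 := by
      rw [← h2]
      exact Finset.single_le_sum (f := fun k => (mat A k i) ^ 2) (fun k _ => sq_nonneg _) (Finset.mem_univ i)
    exact abs_le_one_of_sq_le_one h3
  calc |(mat A).trace| = |∑ i, mat A i i| := by simp [Matrix.trace, Matrix.diag]
    _ ≤ ∑ i, |mat A i i| := Finset.abs_sum_le_sum_abs _ _
    _ ≤ ∑ _i : Fin n, (1:ℝ) := Finset.sum_le_sum fun i _ => hd i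
    _ = n := by simp

lemma mat_one {n : ℕ} : mat (1 : SO n) = 1 := rfl

lemma trace_mat_one {n : ℕ} : (mat (1 : SO n)).trace = n := by
  rw [mat_one, Matrix.trace_one]; simp

lemma mat_continuous {n : ℕ} : Continuous (fun A : SO n => mat A) :=
  continuous_subtype_val.comp continuous_subtype_val

lemma trace_continuous {n : ℕ} : Continuous (fun A : SO n => (mat A).trace) :=
  mat_continuous.matrix_trace

lemma mat_measurable {n : ℕ} : Measurable (fun A : SO n => mat A) :=
  measurable_subtype_coe.comp measurable_subtype_coe

lemma trace_measurable {n : ℕ} : Measurable (fun A : SO n => (mat A).trace) := by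
  have : (fun A : SO n => (mat A).trace) = fun A => ∑ i, mat A i i := by
    funext A; simp [Matrix.trace, Matrix.diag]
  rw [this]
  exact Finset.measurable_sum _ fun i _ =>
    (measurable_pi_apply i).comp ((measurable_pi_apply i).comp mat_measurable)


/-- With `c₁(κ) = (1/n)⟨Tr A⟩_{exp(κ Tr A)}` defined via normalized-Haar-measure
averages over `SO(n,ℝ)`, one has `c₁(κ) → 1` as `κ → ∞`. -/
theorem stmt_4 (n : ℕ) (hn : 3 ≤ n) (μ : Measure (SO n))
    [IsProbabilityMeasure μ] [μ.IsHaarMeasure]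
    (c1 : ℝ → ℝ)
    (hc1 : ∀ κ : ℝ, c1 κ = (n : ℝ)⁻¹ *
        ((∫ A, (mat A).trace * Real.exp (κ * (mat A).trace) ∂μ) /
         (∫ A, Real.exp (κ * (mat A).trace) ∂μ))) :
    Filter.Tendsto c1 Filter.atTop (nhds 1) := by
  have hn0 : (0:ℝ) < n := by positivity
  set f : SO n → ℝ := fun A => (mat A).trace with hf_def
  have hfb : ∀ A, |f A| ≤ n := fun A => abs_trace_le A
  have hfle : ∀ A, f A ≤ n := fun A => (abs_le.mp (hfb A)).2
  have hfge : ∀ A, -(n:ℝ) ≤ f A := fun A => (abs_le.mp (hfb A)).1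
  have hfm : Measurable f := trace_measurable
  set S : ℝ → ℝ := fun κ => ∫ A, Real.exp (κ * f A) ∂μ with hS_def
  set T : ℝ → ℝ := fun κ => ∫ A, f A * Real.exp (κ * f A) ∂μ with hT_def
  -- integrability
  have hgm : ∀ κ : ℝ, Measurable (fun A => Real.exp (κ * f A)) :=
    fun κ => Real.measurable_exp.comp (measurable_const.mul hfm)
  have hg_int : ∀ κ : ℝ, Integrable (fun A => Real.exp (κ * f A)) μ := by
    intro κ
    refine Integrable.mono' (integrable_const (Real.exp (|κ| * n))) (hgm κ).aestronglyMeasurable ?_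
    filter_upwards with A
    rw [Real.norm_eq_abs, Real.abs_exp]
    refine Real.exp_le_exp.mpr ?_
    calc κ * f A ≤ |κ * f A| := le_abs_self _
      _ = |κ| * |f A| := abs_mul _ _
      _ ≤ |κ| * n := mul_le_mul_of_nonneg_left (hfb A) (abs_nonneg κ)
  have hfg_int : ∀ κ : ℝ, Integrable (fun A => f A * Real.exp (κ * f A)) μ := by
    intro κ
    refine Integrable.mono' (integrable_const ((n:ℝ) * Real.exp (|κ| * n)))
      (hfm.mul (hgm κ)).aestronglyMeasurable ?_
    filter_upwards with A
    rw [Real.norm_eq_abs, abs_mul, Real.abs_exp]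
    refine mul_le_mul (hfb A) (Real.exp_le_exp.mpr ?_) (Real.exp_pos _).le hn0.le
    calc κ * f A ≤ |κ * f A| := le_abs_self _
      _ = |κ| * |f A| := abs_mul _ _
      _ ≤ |κ| * n := mul_le_mul_of_nonneg_left (hfb A) (abs_nonneg κ)
  have hμ1 : μ Set.univ = 1 := measure_univ
  have hS_pos : ∀ κ : ℝ, 0 < S κ := by
    intro κ
    rw [hS_def]
    rw [integral_pos_iff_support_of_nonneg (fun A => (Real.exp_pos _).le) (hg_int κ)]
    have hsupp : Function.support (fun A : SO n => Real.exp (κ * f A)) = Set.univ := by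
      ext A; simp [Function.support, (Real.exp_pos (κ * f A)).ne']
    rw [hsupp, hμ1]; norm_num
  -- T ≤ n S
  have hTS : ∀ κ : ℝ, T κ ≤ n * S κ := by
    intro κ
    rw [hT_def, hS_def, ← integral_const_mul]
    refine integral_mono (hfg_int κ) ((hg_int κ).const_mul _) fun A => ?_
    exact mul_le_mul_of_nonneg_right (hfle A) (Real.exp_pos _).le
  set h : ℝ → ℝ := fun κ => (n:ℝ) - T κ / S κ with hh_def
  have hh_nonneg : ∀ κ, 0 ≤ h κ := by
    intro κ
    have := (div_le_iff₀ (hS_pos κ)).mpr (by linarith [hTS κ] : T κ ≤ (n:ℝ) * S κ)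
    simp only [hh_def]; linarith
  -- positivity of measure of superlevel sets
  have hEpos : ∀ ε : ℝ, 0 < ε → 0 < μ {A : SO n | (n:ℝ) - ε < f A} := by
    intro ε hε
    have hopen : IsOpen {A : SO n | (n:ℝ) - ε < f A} :=
      isOpen_lt continuous_const trace_continuous
    refine hopen.measure_pos μ ⟨1, ?_⟩
    have h1 : f 1 = n := trace_mat_one
    simp only [Set.mem_setOf_eq, h1]
    linarith
  -- main tendsto of h to 0
  have hmain : Filter.Tendsto h Filter.atTop (nhds 0) := by
    rw [tendsto_order]
    constructor
    · intro a ha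
      filter_upwards with κ
      exact lt_of_lt_of_le ha (hh_nonneg κ)
    · intro a ha
      set ε : ℝ := a / 2 with hε_def
      have hε : 0 < ε := by positivity
      set E : Set (SO n) := {A : SO n | (n:ℝ) - ε/2 < f A} with hE_def
      have hEmeas : MeasurableSet E := measurableSet_lt measurable_const hfm
      set δ : ℝ := (μ E).toReal with hδ_def
      have hδ : 0 < δ := ENNReal.toReal_pos (hEpos _ (by positivity)).ne' (measure_ne_top μ _)
      -- bound valid for κ ≥ 0
      have hbound : ∀ κ : ℝ, 0 ≤ κ →
          h κ ≤ ε + (2 * n / δ) * Real.exp (-(κ * (ε/2))) := by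
        intro κ hκ
        have hS := hS_pos κ
        -- key1 : n S - T ≤ ε S + 2 n exp (κ (n - ε))
        have key1 : (n:ℝ) * S κ - T κ ≤ ε * S κ + 2 * n * Real.exp (κ * ((n:ℝ) - ε)) := by
          have heq : (n:ℝ) * S κ - T κ
              = ∫ A, ((n:ℝ) - f A) * Real.exp (κ * f A) ∂μ := by
            rw [hS_def, hT_def]
            rw [← integral_const_mul, ← integral_sub ((hg_int κ).const_mul _) (hfg_int κ)]
            congr 1; funext A; ring
          have hrhs : ε * S κ + 2 * n * Real.exp (κ * ((n:ℝ) - ε))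
              = ∫ A, (ε * Real.exp (κ * f A) + 2 * n * Real.exp (κ * ((n:ℝ) - ε))) ∂μ := by
            rw [integral_add ((hg_int κ).const_mul _) (integrable_const _),
              integral_const_mul, integral_const]
            simp [hμ1, hS_def]
          rw [heq, hrhs]
          refine integral_mono (by
              refine Integrable.mono' (integrable_const ((2*(n:ℝ)) * Real.exp (|κ| * n)))
                ((measurable_const.sub hfm).mul (hgm κ)).aestronglyMeasurable ?_
              filter_upwards with A
              rw [Real.norm_eq_abs, abs_mul, Real.abs_exp]
              refine mul_le_mul ?_ (Real.exp_le_exp.mpr ?_) (Real.exp_pos _).le (by positivity)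
              · rw [abs_sub_comm, abs_le]
                constructor <;> nlinarith [hfb A, abs_le.mp (hfb A)]
              · calc κ * f A ≤ |κ * f A| := le_abs_self _
                  _ = |κ| * |f A| := abs_mul _ _
                  _ ≤ |κ| * n := mul_le_mul_of_nonneg_left (hfb A) (abs_nonneg κ))
            (((hg_int κ).const_mul _).add (integrable_const _)) fun A => ?_
          by_cases hA : (n:ℝ) - ε < f A
          · have h1 : ((n:ℝ) - f A) * Real.exp (κ * f A) ≤ ε * Real.exp (κ * f A) :=
              mul_le_mul_of_nonneg_right (by linarith) (Real.exp_pos _).le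
            have h2 : 0 ≤ 2 * (n:ℝ) * Real.exp (κ * ((n:ℝ) - ε)) := by positivity
            linarith
          · push_neg at hA
            have h1 : ((n:ℝ) - f A) * Real.exp (κ * f A)
                ≤ 2 * n * Real.exp (κ * ((n:ℝ) - ε)) := by
              refine mul_le_mul (by linarith [hfge A]) (Real.exp_le_exp.mpr ?_)
                (Real.exp_pos _).le (by positivity)
              exact mul_le_mul_of_nonneg_left hA hκ
            have h2 : 0 ≤ ε * Real.exp (κ * f A) := by positivity
            linarith
        -- key2 : exp (κ (n - ε/2)) * δ ≤ S κ
        have key2 : Real.exp (κ * ((n:ℝ) - ε/2)) * δ ≤ S κ := by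
          have hset : Real.exp (κ * ((n:ℝ) - ε/2)) * δ ≤ ∫ A in E, Real.exp (κ * f A) ∂μ := by
            refine setIntegral_ge_of_const_le_real hEmeas (measure_ne_top μ _) (fun A hA => ?_)
              (hg_int κ).integrableOn
            refine Real.exp_le_exp.mpr (mul_le_mul_of_nonneg_left ?_ hκ)
            exact le_of_lt hA
          refine hset.trans ?_
          exact setIntegral_le_integral (hg_int κ) (Filter.Eventually.of_forall fun A => (Real.exp_pos _).le)
        -- combine
        have hSlb : 0 < Real.exp (κ * ((n:ℝ) - ε/2)) * δ := by positivity
        have hC : (0:ℝ) ≤ 2 * n * Real.exp (κ * ((n:ℝ) - ε)) := by positivity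
        have hstep1 : h κ ≤ ε + 2 * n * Real.exp (κ * ((n:ℝ) - ε)) / S κ := by
          have h1 : h κ = ((n:ℝ) * S κ - T κ) / S κ := by
            rw [hh_def]; field_simp
          have hdiv : ((n:ℝ) * S κ - T κ) / S κ
              ≤ (ε * S κ + 2 * n * Real.exp (κ * ((n:ℝ) - ε))) / S κ := by
            gcongr
          have h2 : (ε * S κ + 2 * n * Real.exp (κ * ((n:ℝ) - ε))) / S κ
              = ε + 2 * n * Real.exp (κ * ((n:ℝ) - ε)) / S κ := by
            field_simp
          rw [h1, ← h2]
          exact hdiv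
        have hstep2 : 2 * (n:ℝ) * Real.exp (κ * ((n:ℝ) - ε)) / S κ
            ≤ (2 * n / δ) * Real.exp (-(κ * (ε/2))) := by
          have hd : 2 * (n:ℝ) * Real.exp (κ * ((n:ℝ) - ε)) / S κ
              ≤ 2 * n * Real.exp (κ * ((n:ℝ) - ε)) / (Real.exp (κ * ((n:ℝ) - ε/2)) * δ) := by
            gcongr
          refine hd.trans_eq ?_
          rw [show -(κ * (ε/2)) = κ * ((n:ℝ) - ε) - κ * ((n:ℝ) - ε/2) by ring, Real.exp_sub]
          field_simp
        linarith
      -- use the bound together with the decay of the tail term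
      have htail : Filter.Tendsto (fun κ : ℝ => (2 * (n:ℝ) / δ) * Real.exp (-(κ * (ε/2))))
          Filter.atTop (nhds 0) := by
        have h1 : Filter.Tendsto (fun κ : ℝ => κ * (ε/2)) Filter.atTop Filter.atTop :=
          Filter.Tendsto.atTop_mul_const (by positivity) Filter.tendsto_id
        have h2 : Filter.Tendsto (fun κ : ℝ => Real.exp (-(κ * (ε/2)))) Filter.atTop (nhds 0) :=
          Real.tendsto_exp_neg_atTop_nhds_zero.comp h1
        simpa using h2.const_mul (2 * (n:ℝ) / δ)
      have hev : ∀ᶠ κ : ℝ in Filter.atTop, (2 * (n:ℝ) / δ) * Real.exp (-(κ * (ε/2))) < ε :=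
        htail.eventually (gt_mem_nhds hε)
      filter_upwards [hev, Filter.eventually_ge_atTop (0:ℝ)] with κ h1 h2
      have h3 := hbound κ h2
      have h4 : ε + ε = a := by rw [hε_def]; ring
      calc h κ ≤ ε + 2 * ↑n / δ * Real.exp (-(κ * (ε / 2))) := h3
        _ < ε + ε := by linarith
        _ = a := h4
  -- conclude
  have hc1' : c1 = fun κ => (n:ℝ)⁻¹ * ((n:ℝ) - h κ) := by
    funext κ
    rw [hc1 κ]
    have : (n:ℝ) - h κ = T κ / S κ := by rw [hh_def]; ring
    rw [this, hT_def, hS_def]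
  rw [hc1']
  have := (Filter.Tendsto.const_sub (n:ℝ) hmain).const_mul ((n:ℝ)⁻¹)
  simpa [inv_mul_cancel₀ hn0.ne'] using this
end
end

section
/- Let F : M_n(ℝ)² → ℝ be odd with respect to its first argument and let g : SO(n,ℝ) → ℝ be invariant by transposition. Then for any Θ ∈ SO(n,ℝ), ∫_{SO(n,ℝ)} F(P_{T_Θ}A, P_{T_Θ^⊥}A) g(AΘ^T) dA = 0, where P_{T_Θ}A = ((AΘ^T − ΘA^T)/2)Θ and P_{T_Θ^⊥}A = ((AΘ^T + ΘA^T)/2)Θ. -/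
open MeasureTheory Matrix

noncomputable section

/-- The projection of `A` onto the tangent space to `SO(n,ℝ)` at `Θ`:
`P_{T_Θ} A = ((AΘᵀ − ΘAᵀ)/2) Θ`. -/
def PT {n : ℕ} (Θ A : Matrix (Fin n) (Fin n) ℝ) : Matrix (Fin n) (Fin n) ℝ :=
  ((2 : ℝ)⁻¹ • (A * Θᵀ - Θ * Aᵀ)) * Θ

/-- The projection of `A` onto the orthogonal complement of the tangent space:
`P_{T_Θ^⊥} A = ((AΘᵀ + ΘAᵀ)/2) Θ`. -/
def PTperp {n : ℕ} (Θ A : Matrix (Fin n) (Fin n) ℝ) : Matrix (Fin n) (Fin n) ℝ :=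
  ((2 : ℝ)⁻¹ • (A * Θᵀ + Θ * Aᵀ)) * Θ

/-! ### Auxiliary instances and lemmas -/

instance matBorel (n : ℕ) : BorelSpace (Matrix (Fin n) (Fin n) ℝ) := Pi.borelSpace

instance orthBorel (n : ℕ) : BorelSpace (Matrix.orthogonalGroup (Fin n) ℝ) :=
  Subtype.borelSpace _

instance SOBorel (n : ℕ) : BorelSpace (SO n) := Subtype.borelSpace _

instance orthTopGroup (n : ℕ) : IsTopologicalGroup (Matrix.orthogonalGroup (Fin n) ℝ) where
  continuous_mul := continuous_mul
  continuous_inv := by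
    apply continuous_induced_rng.mpr
    have h : (Subtype.val ∘ fun u : Matrix.orthogonalGroup (Fin n) ℝ => u⁻¹)
        = fun u : Matrix.orthogonalGroup (Fin n) ℝ =>
          star (u : Matrix (Fin n) (Fin n) ℝ) := rfl
    rw [h]
    exact continuous_star.comp continuous_subtype_val

lemma orth_isCompact (n : ℕ) :
    IsCompact {A : Matrix (Fin n) (Fin n) ℝ | A ∈ Matrix.orthogonalGroup (Fin n) ℝ} := by
  have hK : IsCompact {A : Matrix (Fin n) (Fin n) ℝ | ∀ i j, A i j ∈ Set.Icc (-1 : ℝ) 1} := by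
    have he : {A : Matrix (Fin n) (Fin n) ℝ | ∀ i j, A i j ∈ Set.Icc (-1 : ℝ) 1}
        = Set.pi Set.univ (fun _ : Fin n => Set.pi Set.univ fun _ : Fin n =>
            Set.Icc (-1 : ℝ) 1) := by
      ext A
      exact ⟨fun h i _ j _ => h i j, fun h i j => h i (Set.mem_univ i) j (Set.mem_univ j)⟩
    rw [he]
    exact isCompact_univ_pi fun _ => isCompact_univ_pi fun _ => isCompact_Icc
  apply hK.of_isClosed_subset
  · have h1 : IsClosed {A : Matrix (Fin n) (Fin n) ℝ | star A * A = 1} :=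
      isClosed_eq (Continuous.matrix_mul continuous_star continuous_id) continuous_const
    have h2 : IsClosed {A : Matrix (Fin n) (Fin n) ℝ | A * star A = 1} :=
      isClosed_eq (Continuous.matrix_mul continuous_id continuous_star) continuous_const
    have he : {A : Matrix (Fin n) (Fin n) ℝ | A ∈ Matrix.orthogonalGroup (Fin n) ℝ}
        = {A : Matrix (Fin n) (Fin n) ℝ | star A * A = 1}
          ∩ {A : Matrix (Fin n) (Fin n) ℝ | A * star A = 1} := by
      ext A
      simp only [Set.mem_setOf_eq, Set.mem_inter_iff]
      exact Unitary.mem_iff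
    rw [he]
    exact h1.inter h2
  · intro A hA i j
    have hm : star A * A = 1 := (Unitary.mem_iff.mp hA).1
    have hsum : ∑ k, A k j * A k j = 1 := by
      have h := congrFun (congrFun hm j) j
      simpa [Matrix.mul_apply, Matrix.star_apply, Matrix.one_apply] using h
    have hsq : A i j ^ 2 ≤ 1 := by
      rw [← hsum]
      have h := Finset.single_le_sum (f := fun k => A k j * A k j)
        (fun k _ => mul_self_nonneg _) (Finset.mem_univ i)
      simpa [sq] using h
    have habs : |A i j| ≤ 1 := (sq_le_one_iff_abs_le_one _).mp hsq
    exact Set.mem_Icc.mpr (abs_le.mp habs)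

instance orthCompact (n : ℕ) : CompactSpace (Matrix.orthogonalGroup (Fin n) ℝ) :=
  isCompact_iff_compactSpace.mp (orth_isCompact n)

instance SOCompact (n : ℕ) : CompactSpace (SO n) := by
  have hcl : IsClosed {x : Matrix.orthogonalGroup (Fin n) ℝ | x ∈ SOsub n} := by
    have he : {x : Matrix.orthogonalGroup (Fin n) ℝ | x ∈ SOsub n}
        = (fun x : Matrix.orthogonalGroup (Fin n) ℝ =>
            ((x : Matrix (Fin n) (Fin n) ℝ)).det) ⁻¹' {1} := by
      ext x
      simp [SOsub, Subgroup.mem_mk, Set.mem_preimage]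
    rw [he]
    exact IsClosed.preimage (Continuous.matrix_det continuous_subtype_val) isClosed_singleton
  exact isCompact_iff_compactSpace.mp hcl.isCompact

/-- Uniqueness of Haar probability measures on a compact group: any left-invariant
probability measure coincides with a Haar probability measure. -/
lemma haar_prob_unique {G : Type*} [Group G] [TopologicalSpace G] [IsTopologicalGroup G]
    [MeasurableSpace G] [BorelSpace G] [CompactSpace G] (μ' μ : Measure G)
    [μ.IsHaarMeasure] [IsProbabilityMeasure μ] [μ'.IsMulLeftInvariant]
    [IsProbabilityMeasure μ'] : μ' = μ := by
  have h := Measure.isMulInvariant_eq_smul_of_compactSpace μ' μ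
  have h1 : μ' Set.univ = (Measure.haarScalarFactor μ' μ • μ) Set.univ := by rw [← h]
  rw [measure_univ, Measure.smul_apply, measure_univ, ENNReal.smul_def, smul_eq_mul,
    mul_one] at h1
  have h2 : Measure.haarScalarFactor μ' μ = 1 := by
    exact_mod_cast h1.symm
  rw [h, h2, one_smul]

lemma mat_mul {n : ℕ} (A B : SO n) : mat (A * B) = mat A * mat B := rfl

lemma conjT_eq_transpose {n : ℕ} (M : Matrix (Fin n) (Fin n) ℝ) : Mᴴ = Mᵀ := by
  ext i j
  simp [Matrix.conjTranspose_apply]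

lemma mat_inv {n : ℕ} (A : SO n) : mat A⁻¹ = (mat A)ᵀ := by
  have h : mat A⁻¹ = star (mat A) := rfl
  rw [h, Matrix.star_eq_conjTranspose, conjT_eq_transpose]

lemma mat_mul_transpose {n : ℕ} (A : SO n) : mat A * (mat A)ᵀ = 1 := by
  have h := (Unitary.mem_iff.mp A.1.2).2
  rwa [Matrix.star_eq_conjTranspose, conjT_eq_transpose] at h

lemma transpose_mul_mat {n : ℕ} (A : SO n) : (mat A)ᵀ * mat A = 1 := by
  have h := (Unitary.mem_iff.mp A.1.2).1
  rwa [Matrix.star_eq_conjTranspose, conjT_eq_transpose] at h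

lemma PT_flip {n : ℕ} (T M : Matrix (Fin n) (Fin n) ℝ) (h1 : T * Tᵀ = 1) :
    PT T (T * Mᵀ * T) = - PT T M := by
  unfold PT
  have e1 : T * Mᵀ * T * Tᵀ = T * Mᵀ := by
    rw [Matrix.mul_assoc (T * Mᵀ), h1, Matrix.mul_one]
  have e2 : T * (T * Mᵀ * T)ᵀ = M * Tᵀ := by
    rw [Matrix.transpose_mul, Matrix.transpose_mul, Matrix.transpose_transpose,
      ← Matrix.mul_assoc, h1, Matrix.one_mul]
  rw [e1, e2, ← neg_mul, ← smul_neg, neg_sub]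

lemma PTperp_flip {n : ℕ} (T M : Matrix (Fin n) (Fin n) ℝ) (h1 : T * Tᵀ = 1) :
    PTperp T (T * Mᵀ * T) = PTperp T M := by
  unfold PTperp
  have e1 : T * Mᵀ * T * Tᵀ = T * Mᵀ := by
    rw [Matrix.mul_assoc (T * Mᵀ), h1, Matrix.mul_one]
  have e2 : T * (T * Mᵀ * T)ᵀ = M * Tᵀ := by
    rw [Matrix.transpose_mul, Matrix.transpose_mul, Matrix.transpose_transpose,
      ← Matrix.mul_assoc, h1, Matrix.one_mul]
  rw [e1, e2, add_comm]

/-- If `F` is odd with respect to its first argument and `g` is invariant by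
transposition, then `∫ F(P_{T_Θ}A, P_{T_Θ^⊥}A) g(AΘᵀ) dA = 0` (note that
`AΘᵀ = A * Θ⁻¹` in `SO(n,ℝ)`). -/

theorem stmt_7 (n : ℕ) (hn : 3 ≤ n) (μ : Measure (SO n))
    [IsProbabilityMeasure μ] [μ.IsHaarMeasure]
    (F : Matrix (Fin n) (Fin n) ℝ → Matrix (Fin n) (Fin n) ℝ → ℝ)
    (hodd : ∀ P Q, F (-P) Q = -F P Q)
    (g : SO n → ℝ)
    (htrans : ∀ A B : SO n, mat B = (mat A)ᵀ → g B = g A)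
    (Θ : SO n) :
    ∫ A, F (PT (mat Θ) (mat A)) (PTperp (mat Θ) (mat A)) * g (A * Θ⁻¹) ∂μ = 0 := by
  -- The transformation `ψ : A ↦ Θ A⁻¹ Θ` preserves the Haar probability measure.
  set ψ : SO n → SO n := fun A => Θ * A⁻¹ * Θ with hψ
  -- `μ` is right invariant
  haveI : μ.IsMulRightInvariant := by
    constructor
    intro h
    haveI : IsProbabilityMeasure (μ.map (· * h)) :=
      Measure.isProbabilityMeasure_map (measurable_mul_const h).aemeasurable
    haveI : (μ.map (· * h)).IsMulLeftInvariant := by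
      constructor
      intro c
      rw [Measure.map_map (measurable_const_mul c) (measurable_mul_const h)]
      have hco : ((c * ·) ∘ (· * h)) = ((· * h) ∘ (c * ·)) := by
        funext x
        simp [Function.comp, mul_assoc]
      rw [hco, ← Measure.map_map (measurable_mul_const h) (measurable_const_mul c),
        map_mul_left_eq_self]
    exact haar_prob_unique _ μ
  -- `μ` is inversion invariant
  have hinv : μ.inv = μ := by
    haveI : IsProbabilityMeasure μ.inv := by
      rw [Measure.inv]
      exact Measure.isProbabilityMeasure_map measurable_inv.aemeasurable
    exact haar_prob_unique _ μ
  -- hence `μ` is `ψ`-invariant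
  have hmap : μ.map ψ = μ := by
    have hco : ψ = (fun x : SO n => Θ * x) ∘ (fun x : SO n => x * Θ) ∘ Inv.inv := by
      funext x
      simp [hψ, Function.comp, mul_assoc]
    rw [hco, ← Measure.map_map (measurable_const_mul Θ)
        ((measurable_mul_const Θ).comp measurable_inv),
      ← Measure.map_map (measurable_mul_const Θ) measurable_inv,
      ← Measure.inv_def, hinv, map_mul_right_eq_self,
      map_mul_left_eq_self]
  -- `ψ` as a measurable equivalence (it is an involution)
  have hinvol : ∀ A : SO n, ψ (ψ A) = A := by
    intro A
    simp [hψ, mul_assoc]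
  let e : SO n ≃ᵐ SO n :=
    { toFun := ψ
      invFun := ψ
      left_inv := hinvol
      right_inv := hinvol
      measurable_toFun := ((measurable_inv.const_mul Θ).mul_const Θ)
      measurable_invFun := ((measurable_inv.const_mul Θ).mul_const Θ) }
  set f : SO n → ℝ :=
    fun A => F (PT (mat Θ) (mat A)) (PTperp (mat Θ) (mat A)) * g (A * Θ⁻¹) with hf
  -- pointwise identity : `f (ψ A) = - f A`
  have hptw : ∀ A : SO n, f (ψ A) = - f A := by
    intro A
    have hmatψ : mat (ψ A) = mat Θ * (mat A)ᵀ * mat Θ := by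
      rw [hψ]
      simp only [mat_mul, mat_inv]
    have hg : g (ψ A * Θ⁻¹) = g (A * Θ⁻¹) := by
      apply htrans
      have h1 : ψ A * Θ⁻¹ = Θ * A⁻¹ := by
        rw [hψ]
        group
      rw [h1, mat_mul, mat_inv, mat_mul, mat_inv, Matrix.transpose_mul,
        Matrix.transpose_transpose]
    rw [hf]
    simp only [hmatψ, hg, PT_flip (mat Θ) (mat A) (mat_mul_transpose Θ),
      PTperp_flip (mat Θ) (mat A) (mat_mul_transpose Θ), hodd, neg_mul]
  -- conclude by the change of variables `A ↦ ψ A`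
  have hint : ∫ A, f A ∂μ = ∫ A, f (ψ A) ∂μ := by
    conv_lhs => rw [← hmap]
    exact MeasureTheory.integral_map_equiv e f
  have hneg : ∫ A, f (ψ A) ∂μ = - ∫ A, f A ∂μ := by
    simp only [hptw]
    exact integral_neg f
  have : ∫ A, f A ∂μ = 0 := by linarith [hint, hneg, hint.trans hneg]
  exact this
end
end
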